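/- Let $f_0$ and $g$ be probability density functions on $\mathbb{R}^d$ with $f_0 \ne g$ on a set of positive measure, and let $\rho > 0$. Then $\int \frac{f_0(x)^2 + \rho^2 g(x)^2}{(1+\rho)(f_0(x) + \rho g(x))}\, dx > \frac{1 + \rho^2}{(1+\rho)^2}$, equivalently $1 - \delta(f_0,g,\rho) < \frac{2\rho}{(1+\rho)^2}$ where $\delta(f_0,g,\rho)$ denotes the integral on the left. -/
import Mathlib

open MeasureTheory

set_option maxHeartbeats 1000000 in

/-- Henze–Penrose: if the densities `f₀` and `g` differ on a set of positive
measure, then `δ(f₀,g,ρ) > (1+ρ²)/(1+ρ)²`. -/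
theorem henze_penrose_strict (d : ℕ) (hd : 1 ≤ d)
    (f0 g : EuclideanSpace ℝ (Fin d) → ℝ) (rho : ℝ) (hrho : 0 < rho)
    (hf0meas : Measurable f0) (hgmeas : Measurable g)
    (hf0nn : ∀ x, 0 ≤ f0 x) (hgnn : ∀ x, 0 ≤ g x)
    (hf0int : ∫ x, f0 x = 1) (hgint : ∫ x, g x = 1)
    (hf0i : MeasureTheory.Integrable f0) (hgi : MeasureTheory.Integrable g)
    (hne : 0 < MeasureTheory.volume {x | f0 x ≠ g x}) :
    (1 + rho ^ 2) / (1 + rho) ^ 2 <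
      ∫ x in {x | 0 < f0 x + rho * g x},
        (f0 x ^ 2 + rho ^ 2 * g x ^ 2) / ((1 + rho) * (f0 x + rho * g x)) := by
  have h1r : (0:ℝ) < 1 + rho := by linarith
  set S : Set (EuclideanSpace ℝ (Fin d)) := {x | 0 < f0 x + rho * g x} with hSdef
  have hSmeas : MeasurableSet S :=
    measurableSet_lt measurable_const (hf0meas.add (hgmeas.const_mul rho))
  set φ : EuclideanSpace ℝ (Fin d) → ℝ :=
    fun x => (f0 x ^ 2 + rho ^ 2 * g x ^ 2) / ((1 + rho) * (f0 x + rho * g x)) with hφdef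
  set a : ℝ := (1 + 2*rho - rho^2) / (1+rho)^3 with hadef
  set b : ℝ := rho * (rho^2 + 2*rho - 1) / (1+rho)^3 with hbdef
  set L : EuclideanSpace ℝ (Fin d) → ℝ := fun x => a * f0 x + b * g x with hLdef
  set D : EuclideanSpace ℝ (Fin d) → ℝ :=
    fun x => 2 * rho^2 * (f0 x - g x)^2 / ((1+rho)^3 * (f0 x + rho * g x)) with hDdef
  -- sum is nonneg everywhere
  have hsnn : ∀ x, 0 ≤ f0 x + rho * g x := fun x =>
    add_nonneg (hf0nn x) (mul_nonneg hrho.le (hgnn x))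
  -- key pointwise identity on S
  have hkey : ∀ x ∈ S, φ x = L x + D x := by
    intro x hx
    have hs : 0 < f0 x + rho * g x := hx
    simp only [hφdef, hLdef, hDdef, hadef, hbdef]
    field_simp
    ring
  -- zero outside S
  have hzero' : ∀ x, f0 x + rho * g x ≤ 0 → f0 x = 0 ∧ g x = 0 := by
    intro x hle
    have h1 := hf0nn x
    have h2 := hgnn x
    have h3 : 0 ≤ rho * g x := mul_nonneg hrho.le h2
    have hf : f0 x = 0 := le_antisymm (by linarith) h1
    refine ⟨hf, le_antisymm ?_ h2⟩
    nlinarith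
  have hzero : ∀ x, x ∉ S → f0 x = 0 ∧ g x = 0 := fun x hx =>
    hzero' x (le_of_not_gt hx)
  have hSmem : ∀ x, f0 x ≠ g x → x ∈ S := by
    intro x hx
    rcases eq_or_lt_of_le (hsnn x) with h | h
    · obtain ⟨h1, h2⟩ := hzero' x h.ge
      exact absurd (h1.trans h2.symm) hx
    · exact h
  -- measurability of φ
  have hφmeas : Measurable φ :=
    ((hf0meas.pow_const 2).add ((hgmeas.pow_const 2).const_mul _)).div
      (((hf0meas.add (hgmeas.const_mul rho)).const_mul _))
  -- global domination: |φ x| ≤ |(f0 x + rho * g x)/(1+rho)|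
  have hdom : ∀ x, ‖φ x‖ ≤ ‖(f0 x + rho * g x) / (1 + rho)‖ := by
    intro x
    have hs := hsnn x
    rcases eq_or_lt_of_le hs with h | h
    · obtain ⟨h1, h2⟩ := hzero' x h.ge
      simp [hφdef, h1, h2]
    · rw [Real.norm_eq_abs, Real.norm_eq_abs, abs_of_nonneg, abs_of_nonneg]
      · rw [div_le_div_iff₀ (by positivity) (by positivity)]
        nlinarith [sq_nonneg (f0 x), sq_nonneg (g x), mul_nonneg (hf0nn x) (hgnn x)]
      · positivity
      · apply div_nonneg _ (by positivity)
        positivity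
  have hdomi : Integrable (fun x => (f0 x + rho * g x) / (1 + rho)) :=
    (hf0i.add (hgi.const_mul rho)).div_const _
  have hφi : Integrable φ :=
    hdomi.mono hφmeas.aestronglyMeasurable (Filter.Eventually.of_forall hdom)
  have hLi : Integrable L := (hf0i.const_mul a).add (hgi.const_mul b)
  -- D nonneg everywhere
  have hDnn : ∀ x, 0 ≤ D x := by
    intro x
    apply div_nonneg (by positivity)
    have := hsnn x
    positivity
  -- restricted integrability
  have hφiS : Integrable φ (volume.restrict S) := hφi.restrict
  have hLiS : Integrable L (volume.restrict S) := hLi.restrict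
  have hDiS : Integrable D (volume.restrict S) := by
    apply (hφiS.sub hLiS).congr
    filter_upwards [ae_restrict_mem hSmeas] with x hx
    simp only [Pi.sub_apply]
    rw [hkey x hx]; ring
  -- integrals of f0, g over S are 1
  have hf0S : ∫ x in S, f0 x = 1 := by
    rw [setIntegral_eq_integral_of_forall_compl_eq_zero (fun x hx => (hzero x hx).1)]
    exact hf0int
  have hgS : ∫ x in S, g x = 1 := by
    rw [setIntegral_eq_integral_of_forall_compl_eq_zero (fun x hx => (hzero x hx).2)]
    exact hgint
  have hLint : ∫ x in S, L x = a + b := by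
    simp only [hLdef]
    rw [integral_add ((hf0i.const_mul a).restrict) ((hgi.const_mul b).restrict),
      integral_const_mul, integral_const_mul, hf0S, hgS]
    ring
  -- strict positivity of ∫_S D
  have hDpos : 0 < ∫ x in S, D x := by
    rw [integral_pos_iff_support_of_nonneg hDnn hDiS]
    have hsub : {x | f0 x ≠ g x} ⊆ Function.support D := by
      intro x hx
      have hxS : 0 < f0 x + rho * g x := hSmem x hx
      have hne' : f0 x - g x ≠ 0 := sub_ne_zero.mpr hx
      simp only [Function.mem_support, hDdef]
      positivity
    have hsubS : {x | f0 x ≠ g x} ⊆ S := fun x hx => hSmem x hx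
    calc 0 < volume {x | f0 x ≠ g x} := hne
      _ = (volume.restrict S) {x | f0 x ≠ g x} := by
          rw [Measure.restrict_apply' hSmeas, Set.inter_eq_self_of_subset_left hsubS]
      _ ≤ (volume.restrict S) (Function.support D) := measure_mono hsub
  -- put it together
  have hsplit : ∫ x in S, φ x = (a + b) + ∫ x in S, D x := by
    rw [setIntegral_congr_fun hSmeas hkey, integral_add hLiS hDiS, hLint]
  have hab : a + b = (1 + rho ^ 2) / (1 + rho) ^ 2 := by
    rw [hadef, hbdef]
    field_simp
    ring
  show (1 + rho ^ 2) / (1 + rho) ^ 2 < ∫ x in S, φ x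
  rw [hsplit, hab]
  linarith
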